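/- Let u ∈ L^p(ℝ^N) with 1 ≤ p < ∞ and λ > 0. Then the Lebesgue measure of the set {(x,y) ∈ ℝ^N × ℝ^N : x ≠ y, |u(x)-u(y)| ≥ λ |x-y|^{N/p}} is at most 2^{p+1} κ_N λ^{-p} ‖u‖_{L^p}^p, where κ_N is the volume of the unit ball in ℝ^N. -/
import Mathlib


open MeasureTheory Metric Set Filter
open scoped ENNReal

theorem stmt1 (N : ℕ) (hN : 1 ≤ N) (p : ℝ) (hp : 1 ≤ p)
    (u : EuclideanSpace ℝ (Fin N) → ℝ) (hu : Measurable u)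
    (hint : Integrable (fun x => |u x| ^ p)) (lam : ℝ) (hlam : 0 < lam) :
    volume {q : EuclideanSpace ℝ (Fin N) × EuclideanSpace ℝ (Fin N) |
        q.1 ≠ q.2 ∧ lam * dist q.1 q.2 ^ ((N : ℝ) / p) ≤ |u q.1 - u q.2|}
      ≤ ENNReal.ofReal ((2 : ℝ) ^ (p + 1) *
          (volume (ball (0 : EuclideanSpace ℝ (Fin N)) 1)).toReal *
          lam ^ (-p) * ∫ x, |u x| ^ p) := by
  have hp0 : (0:ℝ) < p := lt_of_lt_of_le one_pos hp
  have hpne : p ≠ 0 := hp0.ne'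
  have hN0 : (0:ℝ) < (N:ℝ) := by exact_mod_cast hN
  have hNne : (N:ℝ) ≠ 0 := hN0.ne'
  set κ : ℝ≥0∞ := volume (ball (0 : (EuclideanSpace ℝ (Fin N))) 1) with hκ
  set A : Set ((EuclideanSpace ℝ (Fin N)) × (EuclideanSpace ℝ (Fin N))) :=
    {q | lam ^ p * dist q.1 q.2 ^ (N:ℝ) ≤ 2 ^ p * |u q.1| ^ p} with hA
  set A' : Set ((EuclideanSpace ℝ (Fin N)) × (EuclideanSpace ℝ (Fin N))) :=
    {q | lam ^ p * dist q.1 q.2 ^ (N:ℝ) ≤ 2 ^ p * |u q.2| ^ p} with hA'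
  -- measurability helpers
  have hrpm : Measurable fun t : ℝ => t ^ (N:ℝ) :=
    (Real.continuous_rpow_const hN0.le).measurable
  have hrpp : Measurable fun t : ℝ => t ^ p :=
    (Real.continuous_rpow_const hp0.le).measurable
  have hm1 : Measurable fun q : (EuclideanSpace ℝ (Fin N)) × (EuclideanSpace ℝ (Fin N)) => lam ^ p * dist q.1 q.2 ^ (N:ℝ) :=
    measurable_const.mul (hrpm.comp (continuous_dist.measurable.comp
      (measurable_fst.prodMk measurable_snd)))
  have hmu : Measurable fun x : (EuclideanSpace ℝ (Fin N)) => (2:ℝ) ^ p * |u x| ^ p :=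
    measurable_const.mul (hrpp.comp hu.abs)
  have hAm : MeasurableSet A :=
    measurableSet_le hm1 (hmu.comp measurable_fst)
  have hA'm : MeasurableSet A' :=
    measurableSet_le hm1 (hmu.comp measurable_snd)
  -- inclusion
  have hsub : {q : (EuclideanSpace ℝ (Fin N)) × (EuclideanSpace ℝ (Fin N)) | q.1 ≠ q.2 ∧
      lam * dist q.1 q.2 ^ ((N : ℝ) / p) ≤ |u q.1 - u q.2|} ⊆ A ∪ A' := by
    rintro ⟨x, y⟩ ⟨hxy, h⟩
    have hd : (0:ℝ) ≤ dist x y := dist_nonneg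
    have e1 : (lam * dist x y ^ ((N:ℝ)/p)) ^ p = lam ^ p * dist x y ^ (N:ℝ) := by
      rw [Real.mul_rpow hlam.le (Real.rpow_nonneg hd _), ← Real.rpow_mul hd,
        div_mul_cancel₀ _ hpne]
    have h1 : (lam * dist x y ^ ((N:ℝ)/p)) ^ p ≤ |u x - u y| ^ p :=
      Real.rpow_le_rpow (by positivity) h hp0.le
    have h2 : |u x - u y| ≤ 2 * max (|u x|) (|u y|) := by
      calc |u x - u y| ≤ |u x| + |u y| := abs_sub _ _
      _ ≤ 2 * max (|u x|) (|u y|) := by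
          rw [two_mul]
          exact add_le_add (le_max_left _ _) (le_max_right _ _)
    have h3 : |u x - u y| ^ p ≤ (2 * max (|u x|) (|u y|)) ^ p :=
      Real.rpow_le_rpow (abs_nonneg _) h2 hp0.le
    have e2 : (2 * max (|u x|) (|u y|)) ^ p
        = 2 ^ p * max (|u x| ^ p) (|u y| ^ p) := by
      rw [Real.mul_rpow (by norm_num) (le_max_of_le_left (abs_nonneg _))]
      congr 1
      rcases le_total (|u x|) (|u y|) with hle | hle
      · rw [max_eq_right hle,
          max_eq_right (Real.rpow_le_rpow (abs_nonneg _) hle hp0.le)]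
      · rw [max_eq_left hle,
          max_eq_left (Real.rpow_le_rpow (abs_nonneg _) hle hp0.le)]
    have key : lam ^ p * dist x y ^ (N:ℝ)
        ≤ 2 ^ p * max (|u x| ^ p) (|u y| ^ p) := by
      rw [← e1, ← e2]; exact h1.trans h3
    rcases le_total (|u x| ^ p) (|u y| ^ p) with hle | hle
    · right
      simpa [hA', max_eq_right hle] using key.trans_eq (by rw [max_eq_right hle])
    · left
      simpa [hA, max_eq_left hle] using key.trans_eq (by rw [max_eq_left hle])
  -- slices of A are closed balls
  have hlamp : (0:ℝ) < lam ^ p := Real.rpow_pos_of_pos hlam p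
  have slice : ∀ x : (EuclideanSpace ℝ (Fin N)), (Prod.mk x ⁻¹' A)
      = closedBall x ((2 ^ p * |u x| ^ p / lam ^ p) ^ ((N:ℝ)⁻¹)) := by
    intro x
    ext y
    have hc : (0:ℝ) ≤ 2 ^ p * |u x| ^ p / lam ^ p := by positivity
    simp only [hA, mem_preimage, mem_setOf_eq, mem_closedBall, dist_comm y x]
    rw [mul_comm, ← le_div_iff₀ hlamp]
    constructor
    · intro hle
      have := Real.rpow_le_rpow (Real.rpow_nonneg dist_nonneg _) hle
        (by positivity : (0:ℝ) ≤ (N:ℝ)⁻¹)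
      rwa [← Real.rpow_mul dist_nonneg, mul_inv_cancel₀ hNne, Real.rpow_one] at this
    · intro hle
      have := Real.rpow_le_rpow dist_nonneg hle hN0.le
      rwa [← Real.rpow_mul hc, inv_mul_cancel₀ hNne, Real.rpow_one] at this
  -- volume of A
  have hfm : Measurable fun x : (EuclideanSpace ℝ (Fin N)) => ENNReal.ofReal (2 ^ p * |u x| ^ p / lam ^ p) :=
    (hmu.div_const _).ennreal_ofReal
  have volA : volume A
      = (∫⁻ x : (EuclideanSpace ℝ (Fin N)), ENNReal.ofReal (2 ^ p * |u x| ^ p / lam ^ p)) * κ := by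
    rw [show (volume : Measure ((EuclideanSpace ℝ (Fin N)) × (EuclideanSpace ℝ (Fin N)))) = (volume : Measure (EuclideanSpace ℝ (Fin N))).prod volume from
      (Measure.volume_eq_prod (EuclideanSpace ℝ (Fin N)) (EuclideanSpace ℝ (Fin N))), Measure.prod_apply hAm]
    rw [← lintegral_mul_const κ hfm]
    congr 1
    ext x
    have hc : (0:ℝ) ≤ 2 ^ p * |u x| ^ p / lam ^ p := by positivity
    rw [slice x, Measure.addHaar_closedBall _ _ (Real.rpow_nonneg hc _)]
    congr 2
    rw [finrank_euclideanSpace_fin, ← Real.rpow_natCast _ N, ← Real.rpow_mul hc,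
      inv_mul_cancel₀ hNne, Real.rpow_one]
  -- volume of A' equals volume of A
  have volA' : volume A' = volume A := by
    have hswap : A' = Prod.swap ⁻¹' A := by
      ext ⟨x, y⟩
      simp [hA, hA', dist_comm]
    rw [hswap, show (volume : Measure ((EuclideanSpace ℝ (Fin N)) × (EuclideanSpace ℝ (Fin N)))) = (volume : Measure (EuclideanSpace ℝ (Fin N))).prod volume from
      (Measure.volume_eq_prod (EuclideanSpace ℝ (Fin N)) (EuclideanSpace ℝ (Fin N)))]
    exact (Measure.measurePreserving_swap).measure_preimage hAm.nullMeasurableSet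
  -- compute the lintegral
  have hInn : (0:ℝ) ≤ ∫ x, |u x| ^ p :=
    integral_nonneg fun x => Real.rpow_nonneg (abs_nonneg _) _
  have lint : (∫⁻ x : (EuclideanSpace ℝ (Fin N)), ENNReal.ofReal (2 ^ p * |u x| ^ p / lam ^ p))
      = ENNReal.ofReal (2 ^ p * lam ^ (-p)) * ENNReal.ofReal (∫ x, |u x| ^ p) := by
    have heq : ∀ x : (EuclideanSpace ℝ (Fin N)), ENNReal.ofReal (2 ^ p * |u x| ^ p / lam ^ p)
        = ENNReal.ofReal (2 ^ p * lam ^ (-p)) * ENNReal.ofReal (|u x| ^ p) := by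
      intro x
      rw [← ENNReal.ofReal_mul (by positivity)]
      congr 1
      rw [Real.rpow_neg hlam.le]
      ring
    have hm2 : Measurable fun x : EuclideanSpace ℝ (Fin N) => ENNReal.ofReal (|u x| ^ p) :=
      (hrpp.comp hu.abs).ennreal_ofReal
    simp only [heq]
    rw [lintegral_const_mul _ hm2]
    congr 1
    exact (ofReal_integral_eq_lintegral_ofReal hint
      (Eventually.of_forall fun x => Real.rpow_nonneg (abs_nonneg _) _)).symm
  have hκfin : κ ≠ ⊤ := measure_ball_lt_top.ne
  have hκReal : κ = ENNReal.ofReal κ.toReal := (ENNReal.ofReal_toReal hκfin).symm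
  calc volume {q : (EuclideanSpace ℝ (Fin N)) × (EuclideanSpace ℝ (Fin N)) | q.1 ≠ q.2 ∧
        lam * dist q.1 q.2 ^ ((N : ℝ) / p) ≤ |u q.1 - u q.2|}
      ≤ volume (A ∪ A') := measure_mono hsub
    _ ≤ volume A + volume A' := measure_union_le _ _
    _ = 2 * volume A := by rw [volA', two_mul]
    _ = ENNReal.ofReal ((2 : ℝ) ^ (p + 1) * κ.toReal * lam ^ (-p) * ∫ x, |u x| ^ p) := by
        rw [volA, lint]
        rw [show (2:ℝ) ^ (p+1) * κ.toReal * lam ^ (-p) * (∫ x, |u x| ^ p)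
            = (2 * (2 ^ p * lam ^ (-p)) * ∫ x, |u x| ^ p) * κ.toReal from by
          rw [Real.rpow_add two_pos, Real.rpow_one]; ring]
        rw [ENNReal.ofReal_mul (mul_nonneg (by positivity) hInn), ← hκReal,
          ENNReal.ofReal_mul (mul_nonneg (by norm_num : (0:ℝ) ≤ 2) (by positivity)),
          ENNReal.ofReal_mul (by norm_num : (0:ℝ) ≤ 2),
          show ENNReal.ofReal (2:ℝ) = 2 from by simp]
        ring
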